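/- For every ℓ ≥ 1 the finite free cumulants of the degree-ℓ Hermite polynomial He_ℓ are given by κ_j^ℓ(He_ℓ) = ℓ if j = 2 and κ_j^ℓ(He_ℓ) = 0 for all other 1 ≤ j ≤ ℓ. -/

import Mathlib

open Polynomial Finset

/-- Normalized repeated derivative `∂_{k|N} p = ((N-k)!/N!) p^{(N-k)}`. -/
noncomputable def dOp (N k : ℕ) (p : Polynomial ℝ) : Polynomial ℝ :=
  C ((Nat.factorial (N - k) : ℝ) / (Nat.factorial N : ℝ)) * (derivative^[N - k] p)

/-- Dilation of a degree-`d` polynomial: `(𝒟_a p)(x) = a^d p(x/a)`. -/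
noncomputable def dil (d : ℕ) (a : ℝ) (p : Polynomial ℝ) : Polynomial ℝ :=
  C (a ^ d) * p.comp (C a⁻¹ * X)

/-- Probabilists' Hermite polynomial. -/
noncomputable def hermiteP (k : ℕ) : Polynomial ℝ :=
  ∑ j ∈ Finset.range (k / 2 + 1),
    C ((Nat.factorial k : ℝ) * (-1) ^ j /
        ((Nat.factorial j : ℝ) * (Nat.factorial (k - 2 * j)) * 2 ^ j)) * X ^ (k - 2 * j)

/-- The signed coefficients `a_k = (-1)^k coeff_{N-k}(p)` of a monic degree-`N` polynomial. -/
noncomputable def coeffSeq (N : ℕ) (p : Polynomial ℝ) (k : ℕ) : ℝ :=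
  (-1 : ℝ) ^ k * p.coeff (N - k)

/-- `κ : ℕ → ℝ` is the sequence of finite free cumulants associated to the signed
coefficient sequence `a` of a monic degree-`N` polynomial. -/
noncomputable def cumulantRel (N : ℕ) (a κ : ℕ → ℝ) : Prop :=
  ∀ k, 1 ≤ k → k ≤ N →
    a k = ((Nat.descFactorial N k : ℝ) / ((N : ℝ) ^ k * (Nat.factorial k : ℝ))) *
      ∑ π : Finpartition (Finset.univ : Finset (Fin k)),
        (-1 : ℝ) ^ (k - π.parts.card) * (N : ℝ) ^ π.parts.card *
          ∏ V ∈ π.parts, ((Nat.factorial (V.card - 1) : ℝ) * κ V.card)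

/-- Finite free additive convolution `p ⊞_N q`. -/
noncomputable def ffconv (N : ℕ) (p q : Polynomial ℝ) : Polynomial ℝ :=
  X ^ N + ∑ k ∈ Finset.Icc 1 N,
    C ((-1 : ℝ) ^ k *
      ∑ ij ∈ antidiagonal k,
        ((Nat.factorial (N - ij.1) : ℝ) * (Nat.factorial (N - ij.2) : ℝ) /
            ((Nat.factorial N : ℝ) * (Nat.factorial (N - k) : ℝ))) *
          coeffSeq N p ij.1 * coeffSeq N q ij.2) * X ^ (N - k)

/-- `j`-th moment of the empirical root distribution of `p`. -/
noncomputable def momentP (j : ℕ) (p : Polynomial ℝ) : ℝ :=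
  (1 / (p.natDegree : ℝ)) * (p.roots.map (fun r => r ^ j)).sum

/-- Apply the differential operator `P(d/dx)` to the polynomial `r`. -/
noncomputable def applyDiffOp (P r : Polynomial ℝ) : Polynomial ℝ :=
  ∑ i ∈ Finset.range (P.natDegree + 1), C (P.coeff i) * derivative^[i] r

/-- odd double factorial -/
def ndf (m : ℕ) : ℕ := ∏ i ∈ Finset.range m, (2 * i + 1)

lemma ndf_mul (m : ℕ) : ndf m * (2 ^ m * Nat.factorial m) = Nat.factorial (2 * m) := by
  induction m with
  | zero => simp [ndf]
  | succ m ih =>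
    have h2 : 2 * (m + 1) = (2 * m + 1) + 1 := by ring
    rw [ndf, Finset.prod_range_succ, ← ndf, h2, Nat.factorial_succ, Nat.factorial_succ,
      Nat.factorial_succ, ← ih]
    ring

section Comb

variable {α : Type*} [DecidableEq α]

/-- Weighted sum over all finpartitions of `s`, each partition weighted by the product of
`h` of its part sizes. -/
noncomputable def Tw (h : ℕ → ℝ) (s : Finset α) : ℝ :=
  ∑ π : Finpartition s, ∏ V ∈ π.parts, h V.card

lemma avoid_parts_of_mem {s V : Finset α} (π : Finpartition s) (hV : V ∈ π.parts) :
    (π.avoid V).parts = π.parts.erase V := by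
  ext c
  rw [Finpartition.mem_avoid, mem_erase]
  constructor
  · rintro ⟨d, hd, hdV, rfl⟩
    have hne : d ≠ V := by rintro rfl; exact hdV le_rfl
    have hdisj : Disjoint d V := π.disjoint hd hV hne
    rw [Finset.sdiff_eq_self_of_disjoint hdisj]
    exact ⟨hne, hd⟩
  · rintro ⟨hne, hc⟩
    refine ⟨c, hc, ?_, Finset.sdiff_eq_self_of_disjoint (π.disjoint hc hV hne)⟩
    intro hle
    obtain ⟨x, hx⟩ := π.nonempty_of_mem_parts hc
    exact (Finset.disjoint_left.1 (π.disjoint hc hV hne)) hx (hle hx)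

/-- Extend a finpartition of `s \ V` by the part `V`. -/
noncomputable def extendBy {s V : Finset α} (hVs : V ⊆ s) (hVne : V.Nonempty)
    (Q : Finpartition (s \ V)) : Finpartition s :=
  Q.extend (b := V) (by simpa [Finset.bot_eq_empty] using hVne.ne_empty)
    Finset.sdiff_disjoint (by rw [sdiff_sup_cancel hVs])

lemma extendBy_parts {s V : Finset α} (hVs : V ⊆ s) (hVne : V.Nonempty)
    (Q : Finpartition (s \ V)) : (extendBy hVs hVne Q).parts = insert V Q.parts := rfl

lemma Tw_rec (h : ℕ → ℝ) (s : Finset α) (a : α) (ha : a ∈ s) :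
    Tw h s = ∑ V ∈ s.powerset.filter (fun V => a ∈ V), h V.card * Tw h (s \ V) := by
  rw [Tw, ← Finset.sum_fiberwise_of_maps_to
    (g := fun π : Finpartition s => π.part a) (t := s.powerset.filter (fun V => a ∈ V))
    (fun π _ => by
      simp only [mem_filter, mem_powerset]
      exact ⟨π.le (π.part_mem.2 ha), π.mem_part ha⟩)]
  refine Finset.sum_congr rfl fun V hV => ?_
  simp only [mem_filter, mem_powerset] at hV
  obtain ⟨hVs, haV⟩ := hV
  have hVne : V.Nonempty := ⟨a, haV⟩
  rw [Tw, Finset.mul_sum]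
  refine Finset.sum_nbij' (fun π => π.avoid V) (fun Q => extendBy hVs hVne Q) ?_ ?_ ?_ ?_ ?_
  · intro π hπ; exact Finset.mem_univ _
  · intro Q hQ
    simp only [mem_filter, mem_univ, true_and]
    exact (extendBy hVs hVne Q).part_eq_of_mem
      (by rw [extendBy_parts]; exact mem_insert_self _ _) haV
  · intro π hπ
    simp only [mem_filter, mem_univ, true_and] at hπ
    have hVp : V ∈ π.parts := hπ ▸ π.part_mem.2 ha
    ext1
    rw [extendBy_parts, avoid_parts_of_mem π hVp, Finset.insert_erase hVp]
  · intro Q hQ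
    have hVp : V ∈ (extendBy hVs hVne Q).parts := by
      rw [extendBy_parts]; exact mem_insert_self _ _
    have hVQ : V ∉ Q.parts := by
      intro hmem
      have := Q.le hmem haV
      simp at this
      exact this.2 haV
    ext1
    rw [avoid_parts_of_mem _ hVp, extendBy_parts, Finset.erase_insert hVQ]
  · intro π hπ
    simp only [mem_filter, mem_univ, true_and] at hπ
    have hVp : V ∈ π.parts := hπ ▸ π.part_mem.2 ha
    rw [avoid_parts_of_mem π hVp, ← Finset.mul_prod_erase _ _ hVp]

lemma Tw_empty (h : ℕ → ℝ) : Tw h (∅ : Finset α) = 1 := by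
  have hu : ∀ π : Finpartition (∅ : Finset α), π.parts = ∅ := fun π =>
    Finpartition.parts_eq_empty_iff.2 Finset.bot_eq_empty.symm
  have hcard : Fintype.card (Finpartition (∅ : Finset α)) = 1 := by
    refine Fintype.card_eq_one_iff.2 ⟨⊥, fun π => ?_⟩
    ext1; rw [hu π, hu ⊥]
  rw [Tw]
  calc (∑ π : Finpartition (∅ : Finset α), ∏ V ∈ π.parts, h V.card)
      = ∑ π : Finpartition (∅ : Finset α), 1 := by
        refine Finset.sum_congr rfl fun π _ => ?_; rw [hu π, Finset.prod_empty]
    _ = 1 := by rw [Finset.sum_const]; simp [Finset.card_univ, hcard]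

lemma pair_filter_eq (s : Finset α) (a : α) (ha : a ∈ s) :
    (s.powerset.filter (fun V => a ∈ V)).filter (fun V => V.card = 2)
      = (s.erase a).image (fun b => ({a, b} : Finset α)) := by
  ext V
  simp only [mem_filter, mem_powerset, mem_image, mem_erase]
  constructor
  · rintro ⟨⟨hVs, haV⟩, hc⟩
    obtain ⟨x, y, hxy, rfl⟩ := Finset.card_eq_two.1 hc
    rcases Finset.mem_insert.1 haV with rfl | hy
    · exact ⟨y, ⟨fun h => hxy h.symm, hVs (by simp)⟩, rfl⟩
    · rcases Finset.mem_singleton.1 hy with rfl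
      exact ⟨x, ⟨hxy, hVs (by simp)⟩, by rw [Finset.pair_comm]⟩
  · rintro ⟨b, ⟨hba, hbs⟩, rfl⟩
    refine ⟨⟨?_, by simp⟩, Finset.card_pair (fun h => hba h.symm)⟩
    intro x hx
    rcases Finset.mem_insert.1 hx with rfl | hx
    · exact ha
    · rcases Finset.mem_singleton.1 hx with rfl; exact hbs

lemma Tw_pair (h : ℕ → ℝ) (hh : ∀ n, n ≠ 2 → h n = 0) (n : ℕ) :
    ∀ s : Finset α, s.card = n →
      Tw h s = if Even n then (ndf (n / 2) : ℝ) * h 2 ^ (n / 2) else 0 := by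
  induction n using Nat.strong_induction_on with
  | _ n IH =>
  intro s hs
  rcases Finset.eq_empty_or_nonempty s with rfl | ⟨a, ha⟩
  · simp only [Finset.card_empty] at hs
    subst hs
    simpa [ndf] using Tw_empty h (α := α)
  · rw [Tw_rec h s a ha]
    rw [← Finset.sum_filter_of_ne (p := fun V => V.card = 2)
      (fun V _ hne => by
        by_contra hc
        exact hne (by rw [hh V.card hc, zero_mul]))]
    rw [pair_filter_eq s a ha, Finset.sum_image (by
      intro x hx y hy hxy
      have : x ∈ ({a, y} : Finset α) := by simp only at hxy; rw [← hxy]; simp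
      rcases Finset.mem_insert.1 this with rfl | hx2
      · exact absurd rfl (Finset.mem_erase.1 hx).1
      · exact Finset.mem_singleton.1 hx2)]
    have hcal : ∀ b ∈ s.erase a,
        h ({a, b} : Finset α).card * Tw h (s \ {a, b})
          = h 2 * (if Even (n - 2) then (ndf ((n - 2) / 2) : ℝ) * h 2 ^ ((n - 2) / 2) else 0) := by
      intro b hb
      obtain ⟨hba, hbs⟩ := Finset.mem_erase.1 hb
      have hc2 : ({a, b} : Finset α).card = 2 := Finset.card_pair (fun h => hba h.symm)
      have hsub : ({a, b} : Finset α) ⊆ s := by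
        intro x hx
        rcases Finset.mem_insert.1 hx with rfl | hx
        · exact ha
        · rcases Finset.mem_singleton.1 hx with rfl; exact hbs
      have hcard : (s \ ({a, b} : Finset α)).card = n - 2 := by
        rw [Finset.card_sdiff_of_subset hsub, hc2, hs]
      have hn2 : 2 ≤ n := by
        rw [← hs]; rw [← hc2]; exact Finset.card_le_card hsub
      rw [hc2, IH (n - 2) (by omega) _ hcard]
    rw [Finset.sum_congr rfl hcal, Finset.sum_const, Finset.card_erase_of_mem ha, hs,
      nsmul_eq_mul]
    by_cases hn1 : n = 1
    · subst hn1; norm_num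
    rcases Nat.eq_zero_or_pos n with rfl | hn0
    · simp only [Finset.card_eq_zero] at hs
      exact absurd hs (Finset.nonempty_iff_ne_empty.1 ⟨a, ha⟩)
    have hn2 : 2 ≤ n := by omega
    rcases Nat.even_or_odd n with he | ho
    · obtain ⟨m, rfl⟩ := he
      have hm1 : 1 ≤ m := by omega
      have h1 : m + m - 2 = 2 * (m - 1) := by omega
      have h2 : Even (m + m) := ⟨m, rfl⟩
      have h3 : Even (m + m - 2) := by rw [h1]; exact ⟨m - 1, by omega⟩
      have h4 : (m + m - 2) / 2 = m - 1 := by omega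
      have h5 : (m + m) / 2 = m := by omega
      rw [if_pos h3, if_pos h2, h4, h5]
      have hndf : ndf m = ndf (m - 1) * (2 * (m - 1) + 1) := by
        conv_lhs => rw [show m = (m - 1) + 1 by omega]
        rw [ndf, Finset.prod_range_succ, ← ndf]
      rw [hndf]
      have hpow : h 2 ^ m = h 2 ^ (m - 1) * h 2 := by
        conv_lhs => rw [show m = (m - 1) + 1 by omega]; rw [pow_succ]
      rw [hpow]
      have hc1 : ((m + m - 1 : ℕ) : ℝ) = 2 * (m : ℝ) - 1 := by
        rw [Nat.cast_sub (by omega)]; push_cast; ring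
      have hc2 : ((m - 1 : ℕ) : ℝ) = (m : ℝ) - 1 := by
        rw [Nat.cast_sub hm1]; push_cast; ring
      rw [show m + m - 1 = m * 2 - 1 by omega] at hc1 ⊢
      rw [hc1]
      push_cast [hc2]
      ring
    · obtain ⟨j, hj⟩ := ho
      have h3 : ¬ Even (n - 2) := by rintro ⟨i, hi⟩; omega
      have h4 : ¬ Even n := by rintro ⟨i, hi⟩; omega
      rw [if_neg h3, if_neg h4]
      ring

end Comb

/-- rewrite each partition term multiplicatively -/
lemma term_eq (N k : ℕ) (κ : ℕ → ℝ) (π : Finpartition (Finset.univ : Finset (Fin k))) :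
    (-1 : ℝ) ^ (k - π.parts.card) * (N : ℝ) ^ π.parts.card *
        ∏ V ∈ π.parts, ((Nat.factorial (V.card - 1) : ℝ) * κ V.card)
      = ∏ V ∈ π.parts,
          ((-1 : ℝ) ^ (V.card - 1) * (N : ℝ) * ((Nat.factorial (V.card - 1) : ℝ) * κ V.card)) := by
  simp only [Finset.prod_mul_distrib, Finset.prod_const, Finset.prod_pow_eq_pow_sum]
  have hsum : ∑ V ∈ π.parts, (V.card - 1) = k - π.parts.card := by
    have h1 : ∑ V ∈ π.parts, V.card = k := by
      rw [π.sum_card_parts, Finset.card_univ, Fintype.card_fin]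
    have h2 : ∑ V ∈ π.parts, (V.card - 1) + π.parts.card = ∑ V ∈ π.parts, V.card := by
      rw [Finset.card_eq_sum_ones π.parts, ← Finset.sum_add_distrib]
      refine Finset.sum_congr rfl fun V hV => ?_
      have := Finset.card_pos.2 (π.nonempty_of_mem_parts hV)
      omega
    omega
  rw [hsum]

lemma herm_coeff (ℓ k : ℕ) (hk1 : 1 ≤ k) (hkl : k ≤ ℓ) :
    (hermiteP ℓ).coeff (ℓ - k) =
      if Even k then
        (Nat.factorial ℓ : ℝ) * (-1) ^ (k / 2) /
          ((Nat.factorial (k / 2) : ℝ) * (Nat.factorial (ℓ - k)) * 2 ^ (k / 2))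
      else 0 := by
  rw [hermiteP, finset_sum_coeff]
  simp only [coeff_C_mul, coeff_X_pow]
  rcases Nat.even_or_odd k with he | ho
  · obtain ⟨m, rfl⟩ := he
    rw [if_pos ⟨m, rfl⟩]
    rw [Finset.sum_eq_single m]
    · have : ℓ - (m + m) = ℓ - 2 * m := by omega
      rw [if_pos (by omega), show (m + m) / 2 = m by omega, show ℓ - (m+m) = ℓ - 2*m by omega]
      ring
    · intro j hj hjm
      rw [Finset.mem_range] at hj
      rw [if_neg (by omega), mul_zero]
    · intro hm
      exact absurd (Finset.mem_range.2 (by omega)) hm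
  · rw [if_neg (by rw [← Nat.not_even_iff_odd] at ho; exact ho)]
    refine Finset.sum_eq_zero fun j hj => ?_
    rw [Finset.mem_range] at hj
    obtain ⟨i, hi⟩ := ho
    rw [if_neg (by omega), mul_zero]

lemma herm_rel (ℓ : ℕ) (hℓ : 1 ≤ ℓ) :
    cumulantRel ℓ (coeffSeq ℓ (hermiteP ℓ)) (fun j => if j = 2 then (ℓ : ℝ) else 0) := by
  intro k hk1 hkl
  set h : ℕ → ℝ := fun n =>
    (-1 : ℝ) ^ (n - 1) * (ℓ : ℝ) *
      ((Nat.factorial (n - 1) : ℝ) * (if n = 2 then (ℓ : ℝ) else 0)) with hh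
  have hsum : (∑ π : Finpartition (Finset.univ : Finset (Fin k)),
      (-1 : ℝ) ^ (k - π.parts.card) * (ℓ : ℝ) ^ π.parts.card *
        ∏ V ∈ π.parts, ((Nat.factorial (V.card - 1) : ℝ) *
          (if V.card = 2 then (ℓ : ℝ) else 0))) = Tw h (Finset.univ : Finset (Fin k)) := by
    rw [Tw]
    refine Finset.sum_congr rfl fun π _ => ?_
    have := term_eq ℓ k (fun n => if n = 2 then (ℓ : ℝ) else 0) π
    simpa [hh] using this
  have hzero : ∀ n, n ≠ 2 → h n = 0 := by
    intro n hn; simp [hh, hn]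
  have h2 : h 2 = -((ℓ : ℝ) * ℓ) := by norm_num [hh]
  rw [hsum, Tw_pair h hzero k _ (by simp), coeffSeq, herm_coeff ℓ k hk1 hkl]
  rcases Nat.even_or_odd k with he | ho
  · rw [if_pos he, if_pos he]
    obtain ⟨m, rfl⟩ := he
    have hm2 : m + m = 2 * m := by omega
    have hd2 : (m + m) / 2 = m := by omega
    rw [hd2, h2]
    have hfac : ((ℓ - (m + m)).factorial : ℝ) * (Nat.descFactorial ℓ (m + m) : ℝ)
        = (Nat.factorial ℓ : ℝ) := by
      rw [← Nat.cast_mul, Nat.factorial_mul_descFactorial hkl]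
    have hndf : (ndf m : ℝ) * (2 ^ m * (Nat.factorial m : ℝ)) = (Nat.factorial (m + m) : ℝ) := by
      rw [← Nat.cast_ofNat, ← Nat.cast_pow, ← Nat.cast_mul, ← Nat.cast_mul, ndf_mul, hm2]
    have hne : ((ℓ : ℝ)) ≠ 0 := Nat.cast_ne_zero.2 (by omega)
    have hfm : (Nat.factorial m : ℝ) ≠ 0 := Nat.cast_ne_zero.2 (Nat.factorial_ne_zero m)
    have hfl : (Nat.factorial (ℓ - (m + m)) : ℝ) ≠ 0 := Nat.cast_ne_zero.2 (Nat.factorial_ne_zero _)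
    have hfk : (Nat.factorial (m + m) : ℝ) ≠ 0 := Nat.cast_ne_zero.2 (Nat.factorial_ne_zero _)
    have h2m : (2 : ℝ) ^ m ≠ 0 := pow_ne_zero _ two_ne_zero
    -- goal is an identity in ℝ
    have hpow : (-((ℓ:ℝ) * ℓ)) ^ m = (-1) ^ m * (ℓ:ℝ) ^ (m + m) := by
      rw [neg_mul_eq_neg_mul, ← neg_one_mul, mul_pow, mul_pow]
      rw [pow_add]
      ring
    rw [hpow]
    have hndf0 : (ndf m : ℝ) ≠ 0 := by
      have : 0 < ndf m := Finset.prod_pos fun i _ => by omega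
      exact Nat.cast_ne_zero.2 (by omega)
    rw [← hfac, ← hndf]
    field_simp
    ring_nf
    rw [Even.neg_one_pow (n := m * 2) ⟨m, by ring⟩, mul_one]
  · rw [if_neg (Nat.not_even_iff_odd.2 ho), if_neg (Nat.not_even_iff_odd.2 ho)]
    simp

lemma top_of_card_part (k : ℕ) (hk : 1 ≤ k) (π : Finpartition (Finset.univ : Finset (Fin k)))
    {V : Finset (Fin k)} (hV : V ∈ π.parts) (hVk : V.card = k) :
    π.parts = {(Finset.univ : Finset (Fin k))} := by
  have hVu : V = Finset.univ := Finset.eq_univ_of_card V (by rw [hVk, Fintype.card_fin])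
  subst hVu
  ext W
  simp only [Finset.mem_singleton]
  constructor
  · intro hW
    by_contra hne
    have hd : Disjoint W Finset.univ := π.disjoint hW hV hne
    obtain ⟨x, hx⟩ := π.nonempty_of_mem_parts hW
    exact (Finset.disjoint_left.1 hd) hx (Finset.mem_univ x)
  · rintro rfl; exact hV

lemma cumulant_unique (N : ℕ) (hN : 1 ≤ N) (a κ κ' : ℕ → ℝ)
    (h1 : cumulantRel N a κ) (h2 : cumulantRel N a κ') :
    ∀ k, 1 ≤ k → k ≤ N → κ k = κ' k := by
  intro k
  induction k using Nat.strong_induction_on with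
  | _ k IH =>
  intro hk1 hkN
  have e1 := h1 k hk1 hkN
  have e2 := h2 k hk1 hkN
  have hNpos : (0 : ℝ) < (N : ℝ) := by exact_mod_cast hN
  have hc0 : ((Nat.descFactorial N k : ℝ) / ((N : ℝ) ^ k * (Nat.factorial k : ℝ))) ≠ 0 := by
    apply div_ne_zero
    · exact Nat.cast_ne_zero.2 (by rw [Ne, Nat.descFactorial_eq_zero_iff_lt]; omega)
    · positivity
  have hS := mul_left_cancel₀ hc0 (e1.symm.trans e2)
  have huniv_ne : (Finset.univ : Finset (Fin k)) ≠ ⊥ := by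
    rw [Finset.bot_eq_empty]
    have : (0 : ℕ) < k := hk1
    exact Finset.nonempty_iff_ne_empty.1 (by simp [Finset.univ_nonempty_iff, Fin.pos_iff_nonempty.1 this])
  set π₀ : Finpartition (Finset.univ : Finset (Fin k)) := Finpartition.indiscrete huniv_ne with hπ₀
  have hparts : π₀.parts = {(Finset.univ : Finset (Fin k))} := rfl
  rw [← Finset.add_sum_erase _ _ (Finset.mem_univ π₀),
      ← Finset.add_sum_erase _ _ (Finset.mem_univ π₀)] at hS
  have hrest : ∀ π ∈ (Finset.univ : Finset (Finpartition (Finset.univ : Finset (Fin k)))).erase π₀,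
      (-1 : ℝ) ^ (k - π.parts.card) * (N : ℝ) ^ π.parts.card *
          ∏ V ∈ π.parts, ((Nat.factorial (V.card - 1) : ℝ) * κ' V.card)
        = (-1 : ℝ) ^ (k - π.parts.card) * (N : ℝ) ^ π.parts.card *
          ∏ V ∈ π.parts, ((Nat.factorial (V.card - 1) : ℝ) * κ V.card) := by
    intro π hπ
    have hne : π ≠ π₀ := (Finset.mem_erase.1 hπ).1
    congr 1
    refine Finset.prod_congr rfl fun V hV => ?_
    have hle : V.card ≤ k := by
      have := Finset.card_le_card (π.le hV)
      simpa [Finset.card_univ] using this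
    have hge : 1 ≤ V.card := Finset.card_pos.2 (π.nonempty_of_mem_parts hV)
    have hlt : V.card < k := by
      rcases lt_or_eq_of_le hle with h | h
      · exact h
      · exfalso
        apply hne
        ext1
        rw [top_of_card_part k hk1 π hV h, hparts]
    rw [IH V.card hlt hge (by omega)]
  rw [Finset.sum_congr rfl hrest] at hS
  have hmain := add_right_cancel hS
  rw [hparts] at hmain
  simp only [Finset.card_singleton, Finset.prod_singleton, Finset.card_univ, Fintype.card_fin]
    at hmain
  have hfac : ((Nat.factorial (k - 1) : ℝ)) ≠ 0 := Nat.cast_ne_zero.2 (Nat.factorial_ne_zero _)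
  have hcoe : ((-1 : ℝ) ^ (k - 1) * (N : ℝ) ^ 1 * (Nat.factorial (k - 1) : ℝ)) ≠ 0 := by
    apply mul_ne_zero (mul_ne_zero (pow_ne_zero _ (by norm_num)) (by positivity)) hfac
  exact mul_left_cancel₀ hcoe (by linear_combination hmain)

/-- the finite free cumulants of `He_ℓ` are `κ_j^ℓ(He_ℓ) = ℓ·δ_{j2}`. -/
theorem hermiteP_cumulants (ℓ : ℕ) (hℓ : 1 ≤ ℓ) (κ : ℕ → ℝ)
    (hκ : cumulantRel ℓ (coeffSeq ℓ (hermiteP ℓ)) κ) :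
    ∀ j, 1 ≤ j → j ≤ ℓ → κ j = if j = 2 then (ℓ : ℝ) else 0 := by
  intro j hj1 hjl
  exact cumulant_unique ℓ hℓ _ κ (fun j => if j = 2 then (ℓ : ℝ) else 0) hκ
    (herm_rel ℓ hℓ) j hj1 hjl
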